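/- Let (x₁, x₂) be a pair of real numbers with x₁ − x₂ > 0, x₁ + x₂ > 0 and x₁ < π/4. Then the two equations cot(2(x₁−x₂)) + cot(2(x₁+x₂)) − tan 2x₁ = 0 and cot(2(x₂−x₁)) + cot(2(x₁+x₂)) − tan 2x₂ = 0 hold simultaneously if and only if (x₁, x₂) = ((1/2)·arctan √2, 0). -/

import Mathlib

open Real

/-- For `(x₁, x₂)` with `x₁ - x₂ > 0`, `x₁ + x₂ > 0` and `x₁ < π/4`:
`cot(2(x₁-x₂)) + cot(2(x₁+x₂)) - tan 2x₁ = 0` and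
`cot(2(x₂-x₁)) + cot(2(x₁+x₂)) - tan 2x₂ = 0` hold simultaneously iff
`(x₁, x₂) = ((1/2) arctan √2, 0)`. -/
theorem stmt_17 (x₁ x₂ : ℝ) (h1 : 0 < x₁ - x₂) (h2 : 0 < x₁ + x₂) (h3 : x₁ < π / 4) :
    (Real.cot (2 * (x₁ - x₂)) + Real.cot (2 * (x₁ + x₂)) - Real.tan (2 * x₁) = 0 ∧
     Real.cot (2 * (x₂ - x₁)) + Real.cot (2 * (x₁ + x₂)) - Real.tan (2 * x₂) = 0) ↔
    (x₁ = (1 / 2) * Real.arctan (Real.sqrt 2) ∧ x₂ = 0) := by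
  have hpi := Real.pi_pos
  have hcu : 0 < Real.cos (2 * x₁) := Real.cos_pos_of_mem_Ioo ⟨by linarith, by linarith⟩
  have hsu : 0 < Real.sin (2 * x₁) := Real.sin_pos_of_pos_of_lt_pi (by linarith) (by linarith)
  have hcv : 0 < Real.cos (2 * x₂) := Real.cos_pos_of_mem_Ioo ⟨by linarith, by linarith⟩
  have hsa : 0 < Real.sin (2 * (x₁ - x₂)) := Real.sin_pos_of_pos_of_lt_pi (by linarith) (by linarith)
  have hsb : 0 < Real.sin (2 * (x₁ + x₂)) := Real.sin_pos_of_pos_of_lt_pi (by linarith) (by linarith)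
  have hA : 2 * (x₁ - x₂) = 2 * x₁ - 2 * x₂ := by ring
  have hB : 2 * (x₁ + x₂) = 2 * x₁ + 2 * x₂ := by ring
  have hC : 2 * (x₂ - x₁) = -(2 * x₁ - 2 * x₂) := by ring
  have hpy1 := Real.sin_sq_add_cos_sq (2 * x₁)
  have hpy2 := Real.sin_sq_add_cos_sq (2 * x₂)
  rw [hA] at hsa; rw [hB] at hsb
  rw [Real.cot_eq_cos_div_sin, Real.cot_eq_cos_div_sin, Real.cot_eq_cos_div_sin,
    Real.tan_eq_sin_div_cos, Real.tan_eq_sin_div_cos, hA, hB, hC,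
    Real.sin_neg, Real.cos_neg, Real.sin_sub, Real.cos_sub, Real.sin_add, Real.cos_add]
  set s := Real.sin (2 * x₁) with hs
  set c := Real.cos (2 * x₁) with hc
  set p := Real.sin (2 * x₂) with hp
  set q := Real.cos (2 * x₂) with hq
  rw [Real.sin_sub, ← hs, ← hc, ← hp, ← hq] at hsa
  rw [Real.sin_add, ← hs, ← hc, ← hp, ← hq] at hsb
  clear_value s c p q
  constructor
  · rintro ⟨e1, e2⟩
    have ha' : s * q - c * p ≠ 0 := ne_of_gt hsa
    have hb' : s * q + c * p ≠ 0 := ne_of_gt hsb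
    rw [div_neg] at e2
    field_simp [ha', hb', show q * s - c * p ≠ 0 by rwa [mul_comm q], show q * s + c * p ≠ 0 by rwa [mul_comm q]] at e1 e2
    have hs0 : s ≠ 0 := ne_of_gt hsu
    have hE : s * (2 * c ^ 2) = s * (s ^ 2 - p ^ 2) := by
      linear_combination e1 - s * p ^ 2 * hpy1 + (s ^ 3 - 2 * s * c ^ 2) * hpy2
    have hE' : 2 * c ^ 2 = s ^ 2 - p ^ 2 := mul_left_cancel₀ hs0 hE
    have hP : p * (q ^ 2 + c ^ 2) = 0 := by
      linear_combination (-(1/2) : ℝ) * e2 + (1/2 : ℝ) * p * hE' + (-(3/2) * p * q ^ 2 + (1/2) * p) * hpy1 + ((1/2) * p * c ^ 2 - (1/2) * p) * hpy2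
    have hp0 : p = 0 := by
      rcases mul_eq_zero.mp hP with h | h
      · exact h
      · nlinarith
    have hv0 : 2 * x₂ = 0 := by
      rw [← Real.sin_eq_zero_iff_of_lt_of_lt (by linarith) (by linarith)]; rw [← hp]; exact hp0
    have hx2 : x₂ = 0 := by linarith
    have hsc : (s / c) ^ 2 = 2 := by
      rw [div_pow]
      rw [div_eq_iff (by positivity)]
      nlinarith
    have ht : Real.tan (2 * x₁) = Real.sqrt 2 := by
      rw [Real.tan_eq_sin_div_cos, ← hs, ← hc, ← hsc, Real.sqrt_sq (by positivity)]
    have : 2 * x₁ = Real.arctan (Real.sqrt 2) := by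
      rw [← ht, Real.arctan_tan (by linarith) (by linarith)]
    exact ⟨by linarith, hx2⟩
  · rintro ⟨hx1, hx2⟩
    subst hx2; subst hx1
    have ha : 2 * ((1 / 2) * Real.arctan (Real.sqrt 2)) = Real.arctan (Real.sqrt 2) := by ring
    have hp0 : p = 0 := by rw [hp]; norm_num
    have hq1 : q = 1 := by rw [hq]; norm_num
    have h2 : (Real.sqrt 2) ^ 2 = 2 := Real.sq_sqrt (by norm_num)
    have hs2 : s ^ 2 = 2 * c ^ 2 := by
      rw [hs, hc, ha, Real.sin_arctan, Real.cos_arctan, div_pow, div_pow,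
        Real.sq_sqrt (by positivity)]
      rw [Real.sq_sqrt (by norm_num : (0:ℝ) ≤ 1 + 2)]
      norm_num
    have hs0 : s ≠ 0 := ne_of_gt hsu
    have hc0 : c ≠ 0 := ne_of_gt hcu
    constructor
    · rw [hp0, hq1]
      have hs3 : s ^ 2 * s = 2 * c ^ 2 * s := by rw [hs2]
      simp
      field_simp
      linarith [hs2, hs3]
    · rw [hp0, hq1]
      simp
      field_simp
      ring
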